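/- Let (E, ρ_θ) be a complete b_v(θ) metric space with θ bounded, and S : E → E a mapping satisfying ρ_θ(Su, Sw) ≤ β ρ_θ(u,Su) + γ ρ_θ(w,Sw) for all u, w ∈ E, where β, γ ≥ 0, β + γ < 1, and min{β, γ} < 1 / sup{θ(u,Su), θ(Su,u) : u ∈ E}. Then S has a unique fixed point. -/

import Mathlib

open Filter Topology

/-- A `b_v(θ)` metric on `E`. -/
structure IsBvTheta (E : Type*) (ρ : E → E → ℝ) (θ : E → E → ℝ) (v : ℕ) : Prop where
  hv : 1 ≤ v
  theta_ge_one : ∀ u w, 1 ≤ θ u w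
  nonneg : ∀ u w, 0 ≤ ρ u w
  zero_iff : ∀ u w, ρ u w = 0 ↔ u = w
  symm : ∀ u w, ρ u w = ρ w u
  quad : ∀ u w (z : ℕ → E), u ≠ w →
    (∀ i ∈ Finset.Icc 1 v, z i ≠ u ∧ z i ≠ w) →
    (∀ i ∈ Finset.Icc 1 v, ∀ j ∈ Finset.Icc 1 v, i ≠ j → z i ≠ z j) →
    ρ u w ≤ θ u w *
      (ρ u (z 1) + (∑ i ∈ Finset.Icc 1 (v - 1), ρ (z i) (z (i + 1))) + ρ (z v) w)

/-- Cauchy sequence in a `b_v(θ)` metric space. -/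
def ThetaCauchy {E : Type*} (ρ : E → E → ℝ) (u : ℕ → E) : Prop :=
  ∀ ε > (0 : ℝ), ∃ n₀ : ℕ, ∀ n ≥ n₀, ∀ p > 0, ρ (u n) (u (n + p)) < ε

/-- Completeness of a `b_v(θ)` metric space. -/
def ThetaComplete {E : Type*} (ρ : E → E → ℝ) : Prop :=
  ∀ u : ℕ → E, ThetaCauchy ρ u → ∃ x : E, Tendsto (fun n => ρ (u n) x) atTop (𝓝 0)

/-- Generalized Kannan fixed point theorem in complete b_v(θ) metric spaces. -/
theorem stmt_15 {E : Type*} (ρ θ : E → E → ℝ) (v : ℕ)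
    (h : IsBvTheta E ρ θ v) (hcomp : ThetaComplete ρ)
    (hbdd : ∃ M : ℝ, ∀ u w, θ u w ≤ M)
    (S : E → E) (β γ : ℝ) (hβ : 0 ≤ β) (hγ : 0 ≤ γ) (hsum : β + γ < 1)
    (hΓ : min β γ <
      1 / sSup ((Set.range fun u => θ u (S u)) ∪ (Set.range fun u => θ (S u) u)))
    (hS : ∀ u w, ρ (S u) (S w) ≤ β * ρ u (S u) + γ * ρ w (S w)) :
    ∃! b : E, S b = b := by
  classical
  -- uniqueness reduces to existence
  suffices hex : ∃ b, S b = b by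
    obtain ⟨b, hb⟩ := hex
    refine ⟨b, hb, fun y hy => ?_⟩
    have h1 := hS y b
    rw [hy, hb] at h1
    have h2 : ρ y y = 0 := (h.zero_iff y y).2 rfl
    have h3 : ρ b b = 0 := (h.zero_iff b b).2 rfl
    have h4 : ρ y b = 0 := le_antisymm (by nlinarith) (h.nonneg y b)
    exact (h.zero_iff y b).1 h4
  -- E is nonempty
  rcases isEmpty_or_nonempty E with hE | hE
  · exfalso
    have e1 : (Set.range fun u => θ u (S u)) = ∅ := Set.range_eq_empty _
    have e2 : (Set.range fun u => θ (S u) u) = ∅ := Set.range_eq_empty _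
    rw [e1, e2, Set.empty_union, Real.sSup_empty] at hΓ
    simp only [div_zero] at hΓ
    have := le_min hβ hγ
    linarith
  obtain ⟨a0⟩ := hE
  obtain ⟨M, hM⟩ := hbdd
  set u : ℕ → E := fun n => S^[n] a0 with hu_def
  have hu : ∀ n, u (n + 1) = S (u n) := fun n => Function.iterate_succ_apply' S n a0
  set d : ℕ → ℝ := fun n => ρ (u n) (u (n + 1)) with hd_def
  have hdnn : ∀ n, 0 ≤ d n := fun n => h.nonneg _ _
  have h1γ : 0 < 1 - γ := by linarith
  set lam : ℝ := β / (1 - γ) with hlam_def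
  have hlam0 : 0 ≤ lam := div_nonneg hβ (le_of_lt h1γ)
  have hlam1 : lam < 1 := (div_lt_one h1γ).2 (by linarith)
  have hstep : ∀ n, d (n + 1) ≤ lam * d n := by
    intro n
    have h1 := hS (u n) (u (n + 1))
    rw [← hu n, ← hu (n + 1)] at h1
    have h2 : d (n + 1) ≤ β * d n + γ * d (n + 1) := h1
    rw [hlam_def, div_mul_eq_mul_div, le_div_iff₀ h1γ]
    nlinarith
  have hdpow : ∀ n, d n ≤ lam ^ n * d 0 := by
    intro n
    induction n with
    | zero => simp
    | succ n ih =>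
        calc d (n + 1) ≤ lam * d n := hstep n
          _ ≤ lam * (lam ^ n * d 0) := mul_le_mul_of_nonneg_left ih hlam0
          _ = lam ^ (n + 1) * d 0 := by ring
  have hpowlim : Tendsto (fun n => lam ^ n * d 0) atTop (𝓝 0) := by
    simpa using (tendsto_pow_atTop_nhds_zero_of_lt_one hlam0 hlam1).mul_const (d 0)
  have hdlim : Tendsto d atTop (𝓝 0) := squeeze_zero hdnn hdpow hpowlim
  by_cases hfix : ∃ n, u (n + 1) = u n
  · obtain ⟨n, hn⟩ := hfix
    exact ⟨u n, by rw [← hu n]; exact hn⟩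
  push_neg at hfix
  have hdpos : ∀ n, 0 < d n := by
    intro n
    rcases lt_or_eq_of_le (hdnn n) with h1 | h1
    · exact h1
    · exact absurd ((h.zero_iff _ _).1 h1.symm).symm (hfix n)
  have hdanti : StrictAnti d := by
    apply strictAnti_nat_of_succ_lt
    intro n
    calc d (n + 1) ≤ lam * d n := hstep n
      _ < 1 * d n := mul_lt_mul_of_pos_right hlam1 (hdpos n)
      _ = d n := one_mul _
  have uinj : Function.Injective u := by
    intro a b hab
    have hd : d a = d b := by
      show ρ (u a) (u (a + 1)) = ρ (u b) (u (b + 1))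
      rw [hu a, hu b, hab]
    exact hdanti.injective hd
  -- Cauchy
  have hcauchy : ThetaCauchy ρ u := by
    intro ε hε
    have hlim2 : Tendsto (fun m => (β + γ) * (lam ^ m * d 0)) atTop (𝓝 0) := by
      simpa using hpowlim.const_mul (β + γ)
    have hev := (tendsto_order.1 hlim2).2 ε hε
    rw [eventually_atTop] at hev
    obtain ⟨m₀, hm₀⟩ := hev
    refine ⟨m₀ + 1, fun n hn p hp => ?_⟩
    obtain ⟨m, rfl⟩ : ∃ m, n = m + 1 := ⟨n - 1, by omega⟩
    have h1 := hS (u m) (u (m + p))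
    rw [← hu m, ← hu (m + p)] at h1
    have h1' : ρ (u (m + 1)) (u (m + 1 + p)) ≤ β * d m + γ * d (m + p) := by
      have e : m + 1 + p = m + p + 1 := by omega
      rw [e]; exact h1
    have b1 : d m ≤ lam ^ m * d 0 := hdpow m
    have b2 : d (m + p) ≤ lam ^ m * d 0 := by
      refine (hdpow (m + p)).trans (mul_le_mul_of_nonneg_right ?_ (hdnn 0))
      exact pow_le_pow_of_le_one hlam0 hlam1.le (by omega)
    have hm := hm₀ m (by omega)
    nlinarith
  obtain ⟨x, hx⟩ := hcomp u hcauchy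
  refine ⟨x, ?_⟩
  by_contra hSx
  have hxne : x ≠ S x := fun e => hSx e.symm
  have hc : 0 < ρ x (S x) :=
    (h.nonneg x (S x)).lt_of_ne (fun e => hxne ((h.zero_iff _ _).1 e.symm))
  set c := ρ x (S x) with hc_def
  set T := (Set.range fun u => θ u (S u)) ∪ (Set.range fun u => θ (S u) u) with hT
  have hTbdd : BddAbove T := ⟨M, by rintro t (⟨a, rfl⟩ | ⟨a, rfl⟩) <;> exact hM _ _⟩
  have hθ1s : θ x (S x) ≤ sSup T := le_csSup hTbdd (Or.inl ⟨x, rfl⟩)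
  have hθ2s : θ (S x) x ≤ sSup T := le_csSup hTbdd (Or.inr ⟨x, rfl⟩)
  have hθ1pos : (0:ℝ) < θ x (S x) := lt_of_lt_of_le zero_lt_one (h.theta_ge_one _ _)
  have hθ2pos : (0:ℝ) < θ (S x) x := lt_of_lt_of_le zero_lt_one (h.theta_ge_one _ _)
  have hspos : 0 < sSup T := lt_of_lt_of_le hθ1pos hθ1s
  -- tail of the orbit avoids x and S x
  have hNx : ∃ N, ∀ m ≥ N, u m ≠ x := by
    by_cases hk : ∃ k, u k = x
    · obtain ⟨k, hk⟩ := hk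
      refine ⟨k + 1, fun m hm he => ?_⟩
      have : m = k := uinj (he.trans hk.symm)
      omega
    · exact ⟨0, fun m _ he => hk ⟨m, he⟩⟩
  have hNSx : ∃ N, ∀ m ≥ N, u m ≠ S x := by
    by_cases hk : ∃ k, u k = S x
    · obtain ⟨k, hk⟩ := hk
      refine ⟨k + 1, fun m hm he => ?_⟩
      have : m = k := uinj (he.trans hk.symm)
      omega
    · exact ⟨0, fun m _ he => hk ⟨m, he⟩⟩
  obtain ⟨N1, hN1⟩ := hNx
  obtain ⟨N2, hN2⟩ := hNSx
  have hsumlim : Tendsto (fun n => ∑ i ∈ Finset.Icc 1 (v - 1), d (n + i)) atTop (𝓝 0) := by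
    have hterm : ∀ i : ℕ, Tendsto (fun n => d (n + i)) atTop (𝓝 0) := fun i =>
      hdlim.comp (tendsto_add_atTop_nat i)
    have := tendsto_finset_sum (Finset.Icc 1 (v - 1))
      (fun i (_ : i ∈ Finset.Icc 1 (v - 1)) => hterm i)
    simpa using this
  by_cases hbg : β ≤ γ
  · -- min = β ; use quad at (S x, x), need β * θ (S x) x < 1
    have hβθ : β * θ (S x) x < 1 := by
      have h0 : β < 1 / sSup T := by
        have := min_eq_left hbg
        rw [this] at hΓ; exact hΓ
      have h1 : (1:ℝ) / sSup T ≤ 1 / θ (S x) x :=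
        one_div_le_one_div_of_le hθ2pos hθ2s
      have h2 : β < 1 / θ (S x) x := lt_of_lt_of_le h0 h1
      calc β * θ (S x) x < (1 / θ (S x) x) * θ (S x) x :=
            mul_lt_mul_of_pos_right h2 hθ2pos
        _ = 1 := by field_simp
    set θ2 := θ (S x) x with hθ2_def
    set ε := (1 - β * θ2) * c / θ2 with hε_def
    have hεpos : 0 < ε := by
      apply div_pos _ hθ2pos
      have : 0 < 1 - β * θ2 := by linarith
      exact mul_pos this hc
    set g : ℕ → ℝ := fun n =>
      γ * d n + (∑ i ∈ Finset.Icc 1 (v - 1), ρ (u (n + i)) (u (n + (i + 1)))) +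
        ρ (u (n + v)) x with hg_def
    have hg : Tendsto g atTop (𝓝 0) := by
      have t1 : Tendsto (fun n => γ * d n) atTop (𝓝 0) := by
        simpa using hdlim.const_mul γ
      have t3 : Tendsto (fun n => ρ (u (n + v)) x) atTop (𝓝 0) :=
        hx.comp (tendsto_add_atTop_nat v)
      have := (t1.add hsumlim).add t3
      rw [add_zero, add_zero] at this
      exact this
    have hev := ((tendsto_order.1 hg).2 ε hεpos).and
      (eventually_ge_atTop (max N1 N2))
    obtain ⟨n, hgn, hnN⟩ := hev.exists
    have hz1 : ∀ i ∈ Finset.Icc 1 v, u (n + i) ≠ S x ∧ u (n + i) ≠ x := by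
      intro i hi
      simp only [Finset.mem_Icc] at hi
      have hN1' := le_trans (le_max_left N1 N2) hnN
      have hN2' := le_trans (le_max_right N1 N2) hnN
      exact ⟨hN2 (n + i) (by omega), hN1 (n + i) (by omega)⟩
    have hz2 : ∀ i ∈ Finset.Icc 1 v, ∀ j ∈ Finset.Icc 1 v, i ≠ j →
        u (n + i) ≠ u (n + j) := by
      intro i _ j _ hij e
      have := uinj e
      omega
    have hq := h.quad (S x) x (fun i => u (n + i)) (Ne.symm hxne) hz1 hz2
    have hcc : ρ (S x) x = c := h.symm (S x) x
    rw [hcc] at hq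
    have hfirst : ρ (S x) (u (n + 1)) ≤ β * c + γ * d n := by
      have h1 := hS x (u n)
      rw [← hu n] at h1
      exact h1
    have key : c ≤ θ2 * (β * c + g n) := by
      refine hq.trans (mul_le_mul_of_nonneg_left ?_ (le_of_lt hθ2pos))
      have : g n = γ * d n +
          (∑ i ∈ Finset.Icc 1 (v - 1), ρ (u (n + i)) (u (n + (i + 1)))) +
          ρ (u (n + v)) x := rfl
      rw [this]
      linarith
    have e1 : θ2 * (β * c + g n) = θ2 * β * c + θ2 * g n := by ring
    have e2 : θ2 * ε = (1 - β * θ2) * c := by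
      rw [hε_def]; field_simp
    have e3 : θ2 * g n < θ2 * ε := mul_lt_mul_of_pos_left hgn hθ2pos
    linarith
  · -- min = γ ; use quad at (x, S x), need γ * θ x (S x) < 1
    push_neg at hbg
    have hγθ : γ * θ x (S x) < 1 := by
      have h0 : γ < 1 / sSup T := by
        have := min_eq_right (le_of_lt hbg)
        rw [this] at hΓ; exact hΓ
      have h1 : (1:ℝ) / sSup T ≤ 1 / θ x (S x) :=
        one_div_le_one_div_of_le hθ1pos hθ1s
      have h2 : γ < 1 / θ x (S x) := lt_of_lt_of_le h0 h1
      calc γ * θ x (S x) < (1 / θ x (S x)) * θ x (S x) :=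
            mul_lt_mul_of_pos_right h2 hθ1pos
        _ = 1 := by field_simp
    set θ1 := θ x (S x) with hθ1_def
    set ε := (1 - γ * θ1) * c / θ1 with hε_def
    have hεpos : 0 < ε := by
      apply div_pos _ hθ1pos
      have : 0 < 1 - γ * θ1 := by linarith
      exact mul_pos this hc
    set g : ℕ → ℝ := fun n =>
      ρ x (u (n + 1)) + (∑ i ∈ Finset.Icc 1 (v - 1), ρ (u (n + i)) (u (n + (i + 1)))) +
        β * d (n + (v - 1)) with hg_def
    have hg : Tendsto g atTop (𝓝 0) := by
      have t1 : Tendsto (fun n => ρ x (u (n + 1))) atTop (𝓝 0) := by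
        have : (fun n => ρ x (u (n + 1))) = fun n => ρ (u (n + 1)) x :=
          funext fun n => h.symm _ _
        rw [this]
        exact hx.comp (tendsto_add_atTop_nat 1)
      have t3 : Tendsto (fun n => β * d (n + (v - 1))) atTop (𝓝 0) := by
        simpa using (hdlim.comp (tendsto_add_atTop_nat (v - 1))).const_mul β
      have := (t1.add hsumlim).add t3
      rw [add_zero, add_zero] at this
      exact this
    have hev := ((tendsto_order.1 hg).2 ε hεpos).and
      (eventually_ge_atTop (max N1 N2))
    obtain ⟨n, hgn, hnN⟩ := hev.exists
    have hz1 : ∀ i ∈ Finset.Icc 1 v, u (n + i) ≠ x ∧ u (n + i) ≠ S x := by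
      intro i hi
      simp only [Finset.mem_Icc] at hi
      have hN1' := le_trans (le_max_left N1 N2) hnN
      have hN2' := le_trans (le_max_right N1 N2) hnN
      exact ⟨hN1 (n + i) (by omega), hN2 (n + i) (by omega)⟩
    have hz2 : ∀ i ∈ Finset.Icc 1 v, ∀ j ∈ Finset.Icc 1 v, i ≠ j →
        u (n + i) ≠ u (n + j) := by
      intro i _ j _ hij e
      have := uinj e
      omega
    have hq := h.quad x (S x) (fun i => u (n + i)) hxne hz1 hz2
    have hlast : ρ (u (n + v)) (S x) ≤ β * d (n + (v - 1)) + γ * c := by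
      have hv1 : n + v = (n + (v - 1)) + 1 := by have := h.hv; omega
      have h1 := hS (u (n + (v - 1))) x
      rw [← hu (n + (v - 1))] at h1
      rw [hv1]
      exact h1
    have key : c ≤ θ1 * (g n + γ * c) := by
      refine hq.trans (mul_le_mul_of_nonneg_left ?_ (le_of_lt hθ1pos))
      have : g n = ρ x (u (n + 1)) +
          (∑ i ∈ Finset.Icc 1 (v - 1), ρ (u (n + i)) (u (n + (i + 1)))) +
          β * d (n + (v - 1)) := rfl
      rw [this]
      linarith
    have e1 : θ1 * (g n + γ * c) = θ1 * g n + θ1 * γ * c := by ring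
    have e2 : θ1 * ε = (1 - γ * θ1) * c := by
      rw [hε_def]; field_simp
    have e3 : θ1 * g n < θ1 * ε := mul_lt_mul_of_pos_left hgn hθ1pos
    linarith
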